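/- If R̃ < 0 and the intervention rule G induces a partial intervention set I, then every optimal policy π̃* of the absorbing MDP M̃ (i.e., every policy attaining max_π Ṽ^π(d_0)) satisfies P_G(π̃*) = 0. -/

import Mathlib

open scoped BigOperators Classical

noncomputable section

namespace SafeRL

variable {S A : Type*} [Fintype S] [Fintype A] [Nonempty A]

/-- `d` is a probability distribution on the finite type `S`. -/
def IsDist (d : S → ℝ) : Prop := (∀ s, 0 ≤ d s) ∧ ∑ s, d s = 1

/-- `P` is a transition kernel. -/
def IsKernel (P : S → A → S → ℝ) : Prop := ∀ s a, IsDist (P s a)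

/-- `π` is a (Markov stationary stochastic) policy. -/
def IsPolicy (π : S → A → ℝ) : Prop := ∀ s, (∀ a, 0 ≤ π s a) ∧ ∑ a, π s a = 1

/-- Point mass at `s`. -/
def pureDist (s : S) : S → ℝ := fun s' => if s' = s then 1 else 0

/-- One-step state-distribution update under policy `π`. -/
def step (P : S → A → S → ℝ) (π : S → A → ℝ) (d : S → ℝ) : S → ℝ :=
  fun s' => ∑ s, ∑ a, d s * π s a * P s a s'

/-- State distribution at time `t` when running `π` from `d0`. -/
def distAt (P : S → A → S → ℝ) (π : S → A → ℝ) (d0 : S → ℝ) (t : ℕ) : S → ℝ :=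
  (step P π)^[t] d0

/-- Expected discounted return `V^π(d0)` of policy `π` from initial distribution `d0`. -/
def value (P : S → A → S → ℝ) (π : S → A → ℝ) (r : S → A → ℝ) (γ : ℝ) (d0 : S → ℝ) : ℝ :=
  ∑' t : ℕ, γ ^ t * ∑ s, ∑ a, distAt P π d0 t s * π s a * r s a

/-- State value function `V^π(s)`. -/
def vf (P : S → A → S → ℝ) (π : S → A → ℝ) (r : S → A → ℝ) (γ : ℝ) (s : S) : ℝ :=
  value P π r γ (pureDist s)

/-- State-action value function `Q^π(s,a)`. -/
def qf (P : S → A → S → ℝ) (π : S → A → ℝ) (r : S → A → ℝ) (γ : ℝ) (s : S) (a : A) : ℝ :=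
  r s a + γ * ∑ s', P s a s' * vf P π r γ s'

/-- The cost function `c(s,a) = 1{s = s_▷}` of the cost-based MDP. -/
def cost (sbad : S) : S → A → ℝ := fun s _ => if s = sbad then 1 else 0

/-- Discounted state distribution `d^π(s)`. -/
def dsd (P : S → A → S → ℝ) (π : S → A → ℝ) (γ : ℝ) (d0 : S → ℝ) (s : S) : ℝ :=
  (1 - γ) * ∑' t : ℕ, γ ^ t * distAt P π d0 t s

/-- Discounted state-action distribution `d^π(s,a)`. -/
def dsa (P : S → A → S → ℝ) (π : S → A → ℝ) (γ : ℝ) (d0 : S → ℝ) (s : S) (a : A) : ℝ :=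
  (1 - γ) * ∑' t : ℕ, γ ^ t * distAt P π d0 t s * π s a

/-- Probability of the `h`-step trajectory prefix `f` when running `π` from `d`. -/
def prefProb (P : S → A → S → ℝ) (π : S → A → ℝ) :
    (S → ℝ) → (h : ℕ) → (Fin h → S × A) → ℝ
  | _, 0, _ => 1
  | d, h + 1, f =>
      d (f 0).1 * π (f 0).1 (f 0).2 *
        prefProb P π (P (f 0).1 (f 0).2) h (fun i => f i.succ)

/-- Probability that the `h`-step trajectory prefix generated by `π` from `d0` satisfies `E`. -/
def eventProb (P : S → A → S → ℝ) (π : S → A → ℝ) (d0 : S → ℝ) (h : ℕ)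
    (E : (Fin h → S × A) → Prop) : ℝ :=
  ∑ f : Fin h → S × A, if E f then prefProb P π d0 h f else 0

/-- `Q̄(s,μ) = E_{a ∼ μ(·|s)} Q̄(s,a)`. -/
def Qpol (Qb : S → A → ℝ) (μ : S → A → ℝ) (s : S) : ℝ := ∑ a, μ s a * Qb s a

/-- Advantage-like function `Ā(s,a) = Q̄(s,a) − Q̄(s,μ)`. -/
def Abar (Qb : S → A → ℝ) (μ : S → A → ℝ) (s : S) (a : A) : ℝ := Qb s a - Qpol Qb μ s

/-- The intervention set `I = {(s,a) ∈ S_safe × A : Ā(s,a) > η}`. -/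
def intSet (Qb : S → A → ℝ) (μ : S → A → ℝ) (η : ℝ) (sbad sabs : S) : Set (S × A) :=
  {p | p.1 ≠ sbad ∧ p.1 ≠ sabs ∧ η < Abar Qb μ p.1 p.2}

/-- The shielded policy `π' = G(π)`. -/
def shield (π μ : S → A → ℝ) (I : Set (S × A)) (sbad sabs : S) : S → A → ℝ :=
  fun s a =>
    if s = sbad ∨ s = sabs then π s a
    else (if (s, a) ∈ I then 0 else π s a)
      + μ s a * (1 - ∑ a', if (s, a') ∈ I then π s a' else 0)

/-- `σ`-admissibility of the intervention rule `(Q̄, μ, η)` (the condition does not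
involve `η`): on safe states, `Q̄ ∈ [0,γ]` and
`c(s,a) + γ E_{s'∼P(·|s,a)}[Q̄(s',μ)] ≤ Q̄(s,a) + σ`. -/
def SigmaAdmissible (P : S → A → S → ℝ) (Qb : S → A → ℝ) (μ : S → A → ℝ)
    (γ σ : ℝ) (sbad sabs : S) : Prop :=
  ∀ s, s ≠ sbad → s ≠ sabs → ∀ a : A,
    (0 ≤ Qb s a ∧ Qb s a ≤ γ) ∧
    cost sbad s a + γ * ∑ s', P s a s' * Qpol Qb μ s' ≤ Qb s a + σ

/-- Transition kernel of the absorbing MDP `M̃`; `none` plays the role of `s_†`. -/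
def Ptil (P : S → A → S → ℝ) (I : Set (S × A)) : Option S → A → Option S → ℝ :=
  fun s? a s'? =>
    match s? with
    | none => if s'? = none then 1 else 0
    | some s =>
        if (s, a) ∈ I then (if s'? = none then 1 else 0)
        else
          match s'? with
          | none => 0
          | some s' => P s a s'

/-- Reward of the absorbing MDP `M̃` with penalty `Rt` on the intervention set. -/
def rtil (r : S → A → ℝ) (I : Set (S × A)) (Rt : ℝ) : Option S → A → ℝ :=
  fun s? a =>
    match s? with
    | none => 0
    | some s => if (s, a) ∈ I then Rt else r s a

/-- Extension of a policy on `S` to `S ∪ {s_†}`, uniform at `s_†`. -/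
def extPol (π : S → A → ℝ) : Option S → A → ℝ :=
  fun s? a =>
    match s? with
    | none => (Fintype.card A : ℝ)⁻¹
    | some s => π s a

/-- Extension of an initial distribution on `S` to `S ∪ {s_†}`. -/
def extDist (d0 : S → ℝ) : Option S → ℝ :=
  fun s? => match s? with | none => 0 | some s => d0 s

/-- `P_G(π)`: discounted probability that a trajectory of `π` in `M` visits `I`. -/
def PG (P : S → A → S → ℝ) (π : S → A → ℝ) (d0 : S → ℝ) (γ : ℝ)
    (I : Set (S × A)) : ℝ :=
  (1 - γ) * ∑' h : ℕ, γ ^ h * eventProb P π d0 h (fun f => ∃ i, f i ∈ I)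

/-- The deterministic policy associated to a map `g : S → A`. -/
def detPol (g : S → A) : S → A → ℝ := fun s a => if a = g s then 1 else 0

/-- Bellman optimality operator `T̄` of the cost-based MDP. -/
def Tbar (P : S → A → S → ℝ) (sbad : S) (γ : ℝ) (Q : S → A → ℝ) : S → A → ℝ :=
  fun s a =>
    cost sbad s a +
      γ * ∑ s', P s a s' * Finset.univ.inf' Finset.univ_nonempty (fun a' => Q s' a')

/-! ### Auxiliary lemmas -/

section Aux
set_option linter.unusedSectionVars false

variable (P : S → A → S → ℝ) (π : S → A → ℝ)

lemma step_nonneg (hP : IsKernel P) (hπ : IsPolicy π) (d : S → ℝ)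
    (hd : ∀ s, 0 ≤ d s) (s' : S) : 0 ≤ step P π d s' := by
  refine Finset.sum_nonneg fun s _ => Finset.sum_nonneg fun a _ => ?_
  exact mul_nonneg (mul_nonneg (hd s) ((hπ s).1 a)) ((hP s a).1 s')

lemma step_mass (hP : IsKernel P) (hπ : IsPolicy π) (d : S → ℝ) :
    ∑ s', step P π d s' = ∑ s, d s := by
  unfold step
  rw [Finset.sum_comm]
  refine Finset.sum_congr rfl fun s _ => ?_
  rw [Finset.sum_comm]
  have : ∀ a ∈ Finset.univ, ∑ s', d s * π s a * P s a s' = d s * π s a := by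
    intro a _
    rw [← Finset.mul_sum, (hP s a).2, mul_one]
  rw [Finset.sum_congr rfl this, ← Finset.mul_sum, (hπ s).2, mul_one]

lemma distAt_zero (d : S → ℝ) : distAt P π d 0 = d := rfl

lemma distAt_succ (d : S → ℝ) (t : ℕ) :
    distAt P π d (t + 1) = distAt P π (step P π d) t := by
  unfold distAt
  rw [Function.iterate_succ_apply]

lemma distAt_succ' (d : S → ℝ) (t : ℕ) :
    distAt P π d (t + 1) = step P π (distAt P π d t) := by
  unfold distAt
  rw [Function.iterate_succ_apply']

lemma distAt_nonneg (hP : IsKernel P) (hπ : IsPolicy π) (d : S → ℝ)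
    (hd : ∀ s, 0 ≤ d s) (t : ℕ) : ∀ s, 0 ≤ distAt P π d t s := by
  induction t generalizing d hd with
  | zero => exact hd
  | succ t ih =>
    intro s
    rw [distAt_succ]
    exact ih _ (step_nonneg P π hP hπ d hd) s

lemma distAt_mass (hP : IsKernel P) (hπ : IsPolicy π) (d : S → ℝ) (t : ℕ) :
    ∑ s, distAt P π d t s = ∑ s, d s := by
  induction t generalizing d with
  | zero => rfl
  | succ t ih =>
    rw [distAt_succ, ih, step_mass P π hP hπ]

lemma distAt_isDist (hP : IsKernel P) (hπ : IsPolicy π) (d : S → ℝ)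
    (hd : IsDist d) (t : ℕ) : IsDist (distAt P π d t) :=
  ⟨distAt_nonneg P π hP hπ d hd.1 t, by rw [distAt_mass P π hP hπ, hd.2]⟩

lemma step_linear {ι : Type*} [Fintype ι] (w : ι → ℝ) (e : ι → S → ℝ) :
    step P π (fun s => ∑ x, w x * e x s) = fun s' => ∑ x, w x * step P π (e x) s' := by
  funext s'
  unfold step
  calc (∑ s, ∑ a, (∑ x, w x * e x s) * π s a * P s a s')
      = ∑ s, ∑ x, ∑ a, w x * (e x s * π s a * P s a s') := by
        refine Finset.sum_congr rfl fun s _ => ?_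
        rw [Finset.sum_comm]
        refine Finset.sum_congr rfl fun a _ => ?_
        rw [Finset.sum_mul, Finset.sum_mul]
        exact Finset.sum_congr rfl fun x _ => by ring
    _ = ∑ x, ∑ s, ∑ a, w x * (e x s * π s a * P s a s') := Finset.sum_comm
    _ = ∑ x, w x * ∑ s, ∑ a, e x s * π s a * P s a s' := by
        refine Finset.sum_congr rfl fun x _ => ?_
        rw [Finset.mul_sum]
        exact Finset.sum_congr rfl fun s _ => by rw [Finset.mul_sum]

lemma distAt_linear {ι : Type*} [Fintype ι] (w : ι → ℝ) (t : ℕ) (e : ι → S → ℝ) (s' : S) :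
    distAt P π (fun s => ∑ x, w x * e x s) t s' = ∑ x, w x * distAt P π (e x) t s' := by
  induction t generalizing e with
  | zero => rfl
  | succ t ih =>
    rw [distAt_succ, step_linear]
    have := ih (fun x => step P π (e x))
    simp only [distAt_succ]
    exact this

lemma sum2_linear {ι : Type*} [Fintype ι] (w : ι → ℝ) (e : ι → S → ℝ) (g : S → A → ℝ) :
    ∑ s, ∑ a, (∑ x, w x * e x s) * g s a = ∑ x, w x * ∑ s, ∑ a, e x s * g s a := by
  calc (∑ s, ∑ a, (∑ x, w x * e x s) * g s a)
      = ∑ s, ∑ x, ∑ a, w x * (e x s * g s a) := by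
        refine Finset.sum_congr rfl fun s _ => ?_
        rw [Finset.sum_comm]
        refine Finset.sum_congr rfl fun a _ => ?_
        rw [Finset.sum_mul]
        exact Finset.sum_congr rfl fun x _ => by ring
    _ = ∑ x, ∑ s, ∑ a, w x * (e x s * g s a) := Finset.sum_comm
    _ = ∑ x, w x * ∑ s, ∑ a, e x s * g s a := by
        refine Finset.sum_congr rfl fun x _ => ?_
        rw [Finset.mul_sum]
        exact Finset.sum_congr rfl fun s _ => by rw [Finset.mul_sum]

lemma pureDist_isDist (s : S) : IsDist (pureDist s) := by
  constructor
  · intro s'; unfold pureDist; split <;> norm_num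
  · unfold pureDist; simp

lemma inner_abs_le (hπ : IsPolicy π) (r : S → A → ℝ) (d : S → ℝ) (hd : IsDist d) :
    |∑ s, ∑ a, d s * π s a * r s a| ≤ ∑ s, ∑ a, |r s a| := by
  calc |∑ s, ∑ a, d s * π s a * r s a|
      ≤ ∑ s, |∑ a, d s * π s a * r s a| := Finset.abs_sum_le_sum_abs _ _
    _ ≤ ∑ s, ∑ a, |d s * π s a * r s a| :=
        Finset.sum_le_sum fun s _ => Finset.abs_sum_le_sum_abs _ _
    _ ≤ ∑ s, ∑ a, |r s a| := by
        refine Finset.sum_le_sum fun s _ => Finset.sum_le_sum fun a _ => ?_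
        rw [abs_mul, abs_mul, abs_of_nonneg (hd.1 s), abs_of_nonneg ((hπ s).1 a)]
        have hds : d s ≤ 1 := by
          have := Finset.single_le_sum (f := d) (fun i _ => hd.1 i) (Finset.mem_univ s)
          linarith [hd.2]
        have hπa : π s a ≤ 1 := by
          have := Finset.single_le_sum (f := π s) (fun i _ => (hπ s).1 i) (Finset.mem_univ a)
          linarith [(hπ s).2]
        have h1 : d s * π s a ≤ π s a := mul_le_of_le_one_left ((hπ s).1 a) hds
        calc d s * π s a * |r s a| ≤ 1 * |r s a| :=
              mul_le_mul_of_nonneg_right (h1.trans hπa) (abs_nonneg _)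
          _ = |r s a| := one_mul _

lemma val_summable (hP : IsKernel P) (hπ : IsPolicy π) (r : S → A → ℝ) {γ : ℝ}
    (hγ0 : 0 ≤ γ) (hγ1 : γ < 1) (d : S → ℝ) (hd : IsDist d) :
    Summable (fun t => γ ^ t * ∑ s, ∑ a, distAt P π d t s * π s a * r s a) := by
  refine Summable.of_norm_bounded
    (((summable_geometric_of_lt_one hγ0 hγ1)).mul_left (∑ s, ∑ a, |r s a|)) fun t => ?_
  rw [Real.norm_eq_abs, abs_mul, abs_pow, abs_of_nonneg hγ0, mul_comm]
  have := inner_abs_le π hπ r (distAt P π d t) (distAt_isDist P π hP hπ d hd t)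
  have hγt : (0:ℝ) ≤ γ ^ t := pow_nonneg hγ0 t
  exact mul_le_mul_of_nonneg_right this hγt

lemma distAt_decomp (d : S → ℝ) (t : ℕ) (s' : S) :
    distAt P π d t s' = ∑ x, d x * distAt P π (pureDist x) t s' := by
  have hd : d = fun s => ∑ x, d x * pureDist x s := by
    funext s
    unfold pureDist
    simp [mul_ite, Finset.sum_ite_eq]
  conv_lhs => rw [hd]
  exact distAt_linear P π d t _ s'

lemma value_eq_sum_vf (hP : IsKernel P) (hπ : IsPolicy π) (r : S → A → ℝ) {γ : ℝ}
    (hγ0 : 0 ≤ γ) (hγ1 : γ < 1) (d : S → ℝ) (hd : IsDist d) :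
    value P π r γ d = ∑ x, d x * vf P π r γ x := by
  unfold vf value
  calc (∑' t, γ ^ t * ∑ s, ∑ a, distAt P π d t s * π s a * r s a)
      = ∑' t, ∑ x, d x * (γ ^ t * ∑ s, ∑ a, distAt P π (pureDist x) t s * π s a * r s a) := by
        refine tsum_congr fun t => ?_
        have h1 : ∀ s a, distAt P π d t s * π s a * r s a
            = (∑ x, d x * distAt P π (pureDist x) t s) * (π s a * r s a) := by
          intro s a; rw [← distAt_decomp]; ring
        simp only [h1]
        rw [sum2_linear, Finset.mul_sum]
        refine Finset.sum_congr rfl fun x _ => ?_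
        have hre : ∀ s : S, (∑ a, distAt P π (pureDist x) t s * (π s a * r s a))
            = ∑ a, distAt P π (pureDist x) t s * π s a * r s a :=
          fun s => Finset.sum_congr rfl fun a _ => (mul_assoc _ _ _).symm
        simp only [hre]
        ring
    _ = ∑ x, d x * ∑' t, γ ^ t * ∑ s, ∑ a, distAt P π (pureDist x) t s * π s a * r s a := by
        rw [Summable.tsum_finsetSum fun x _ =>
          ((val_summable P π hP hπ r hγ0 hγ1 (pureDist x) (pureDist_isDist x)).mul_left (d x))]
        exact Finset.sum_congr rfl fun x _ => (tsum_mul_left)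

lemma step_pure (s : S) :
    step P π (pureDist s) = fun s' => ∑ a, π s a * P s a s' := by
  funext s'
  unfold step pureDist
  rw [Finset.sum_comm]
  simp [ite_mul, Finset.sum_ite_eq]

lemma vf_bellman (hP : IsKernel P) (hπ : IsPolicy π) (r : S → A → ℝ) {γ : ℝ}
    (hγ0 : 0 ≤ γ) (hγ1 : γ < 1) (s : S) :
    vf P π r γ s = ∑ a, π s a * (r s a + γ * ∑ s', P s a s' * vf P π r γ s') := by
  have hsum := val_summable P π hP hπ r hγ0 hγ1 (pureDist s) (pureDist_isDist s)
  unfold vf value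
  rw [Summable.tsum_eq_zero_add hsum]
  have h0 : γ ^ 0 * ∑ s'', ∑ a, distAt P π (pureDist s) 0 s'' * π s'' a * r s'' a
      = ∑ a, π s a * r s a := by
    simp only [pow_zero, one_mul, distAt_zero]
    unfold pureDist
    rw [Finset.sum_comm]
    simp [ite_mul, Finset.sum_ite_eq]
  have hsucc : ∀ t, γ ^ (t + 1) * ∑ s'', ∑ a, distAt P π (pureDist s) (t+1) s'' * π s'' a * r s'' a
      = γ * ∑ a, π s a * (γ ^ t * ∑ s'', ∑ a', distAt P π (P s a) t s'' * π s'' a' * r s'' a') := by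
    intro t
    have hP1 : ∀ s'', distAt P π (pureDist s) (t+1) s''
        = ∑ a, π s a * distAt P π (P s a) t s'' := by
      intro s''
      rw [distAt_succ, step_pure]
      exact distAt_linear P π (π s) t (P s) s''
    have h2 : ∀ s'' a', distAt P π (pureDist s) (t+1) s'' * π s'' a' * r s'' a'
        = (∑ a, π s a * distAt P π (P s a) t s'') * (π s'' a' * r s'' a') := by
      intro s'' a'; rw [hP1]; ring
    simp only [h2]
    rw [sum2_linear]
    rw [pow_succ]
    rw [Finset.mul_sum, Finset.mul_sum]
    refine Finset.sum_congr rfl fun a _ => ?_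
    have : ∀ s'', ∑ a', distAt P π (P s a) t s'' * (π s'' a' * r s'' a')
        = ∑ a', distAt P π (P s a) t s'' * π s'' a' * r s'' a' := by
      intro s''; exact Finset.sum_congr rfl fun a' _ => by ring
    simp only [this]
    ring
  calc (γ ^ 0 * ∑ s'', ∑ a, distAt P π (pureDist s) 0 s'' * π s'' a * r s'' a)
        + ∑' t, γ ^ (t + 1) * ∑ s'', ∑ a, distAt P π (pureDist s) (t+1) s'' * π s'' a * r s'' a
      = (∑ a, π s a * r s a) + γ * ∑ a, π s a *
          ∑' t, γ ^ t * ∑ s'', ∑ a', distAt P π (P s a) t s'' * π s'' a' * r s'' a' := by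
        rw [h0]
        congr 1
        simp only [hsucc]
        rw [tsum_mul_left]
        congr 1
        rw [Summable.tsum_finsetSum fun a _ =>
          ((val_summable P π hP hπ r hγ0 hγ1 (P s a) (hP s a)).mul_left (π s a))]
        exact Finset.sum_congr rfl fun a _ => tsum_mul_left
    _ = ∑ a, π s a * (r s a + γ * ∑ s', P s a s' * vf P π r γ s') := by
        rw [Finset.mul_sum, ← Finset.sum_add_distrib]
        refine Finset.sum_congr rfl fun a _ => ?_
        have : (∑' t, γ ^ t * ∑ s'', ∑ a', distAt P π (P s a) t s'' * π s'' a' * r s'' a')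
            = ∑ s', P s a s' * vf P π r γ s' :=
          value_eq_sum_vf P π hP hπ r hγ0 hγ1 (P s a) (hP s a)
        rw [this]
        ring

lemma inner_factor (π' : S → A → ℝ) (d : S → ℝ) (g : S → A → ℝ) :
    ∑ s, ∑ a, d s * π' s a * g s a = ∑ s, d s * ∑ a, π' s a * g s a := by
  refine Finset.sum_congr rfl fun s _ => ?_
  rw [Finset.mul_sum]
  exact Finset.sum_congr rfl fun a _ => by ring

lemma step_pair (π' : S → A → ℝ) (d V : S → ℝ) :
    ∑ s', step P π' d s' * V s' = ∑ s, d s * ∑ a, π' s a * ∑ s', P s a s' * V s' := by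
  unfold step
  calc (∑ s', (∑ s, ∑ a, d s * π' s a * P s a s') * V s')
      = ∑ s', ∑ s, ∑ a, d s * (π' s a * (P s a s' * V s')) := by
        refine Finset.sum_congr rfl fun s' _ => ?_
        rw [Finset.sum_mul]
        refine Finset.sum_congr rfl fun s _ => ?_
        rw [Finset.sum_mul]
        exact Finset.sum_congr rfl fun a _ => by ring
    _ = ∑ s, ∑ s', ∑ a, d s * (π' s a * (P s a s' * V s')) := Finset.sum_comm
    _ = ∑ s, ∑ a, ∑ s', d s * (π' s a * (P s a s' * V s')) :=
        Finset.sum_congr rfl fun s _ => Finset.sum_comm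
    _ = ∑ s, d s * ∑ a, π' s a * ∑ s', P s a s' * V s' := by
        simp only [Finset.mul_sum, mul_assoc]

lemma improve (π' : S → A → ℝ) (r : S → A → ℝ) {γ : ℝ} (d0 : S → ℝ)
    (hP : IsKernel P) (hπ : IsPolicy π) (hπ' : IsPolicy π') (hd0 : IsDist d0)
    (hγ0 : 0 ≤ γ) (hγ1 : γ < 1) (A0 : S → ℝ)
    (hA : ∀ s, A0 s =
      (∑ a, π' s a * (r s a + γ * ∑ s', P s a s' * vf P π r γ s')) - vf P π r γ s)
    (hA0 : ∀ s, 0 ≤ A0 s) (T : ℕ) :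
    value P π r γ d0 + γ ^ T * ∑ s, distAt P π' d0 T s * A0 s ≤ value P π' r γ d0 := by
  set V : S → ℝ := vf P π r γ with hV
  set D : ℕ → S → ℝ := fun t => distAt P π' d0 t with hD
  set U : ℕ → ℝ := fun T =>
    (∑ t ∈ Finset.range T, γ ^ t * ∑ s, ∑ a, D t s * π' s a * r s a)
      + γ ^ T * ∑ s, D T s * V s with hU
  have hU0 : U 0 = value P π r γ d0 := by
    simp only [hU, Finset.range_zero, Finset.sum_empty, pow_zero, one_mul, zero_add]
    exact (value_eq_sum_vf P π hP hπ r hγ0 hγ1 d0 hd0).symm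
  have hUstep : ∀ t, U (t + 1) = U t + γ ^ t * ∑ s, D t s * A0 s := by
    intro t
    have key : (∑ s, ∑ a, D t s * π' s a * r s a) + γ * ∑ s', D (t+1) s' * V s'
        = (∑ s, D t s * A0 s) + ∑ s, D t s * V s := by
      have hDsucc : ∀ s', D (t+1) s' = step P π' (D t) s' := by
        intro s'
        simp only [hD]
        rw [distAt_succ']
      calc (∑ s, ∑ a, D t s * π' s a * r s a) + γ * ∑ s', D (t+1) s' * V s'
          = (∑ s, D t s * ∑ a, π' s a * r s a)
              + γ * ∑ s, D t s * ∑ a, π' s a * ∑ s', P s a s' * V s' := by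
            rw [inner_factor]
            have h5 : ∑ s', D (t+1) s' * V s'
                = ∑ s, D t s * ∑ a, π' s a * ∑ s', P s a s' * V s' := by
              simp only [hDsucc]
              exact step_pair P π' (D t) V
            rw [h5]
        _ = ∑ s, D t s * ∑ a, π' s a * (r s a + γ * ∑ s', P s a s' * V s') := by
            rw [Finset.mul_sum, ← Finset.sum_add_distrib]
            refine Finset.sum_congr rfl fun s _ => ?_
            rw [Finset.mul_sum, Finset.mul_sum, Finset.mul_sum, ← Finset.sum_add_distrib]
            rw [Finset.mul_sum]
            exact Finset.sum_congr rfl fun a _ => by ring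
        _ = (∑ s, D t s * A0 s) + ∑ s, D t s * V s := by
            rw [← Finset.sum_add_distrib]
            refine Finset.sum_congr rfl fun s _ => ?_
            rw [hA s]
            ring
    simp only [hU, Finset.sum_range_succ]
    have : γ ^ (t+1) * ∑ s, D (t+1) s * V s
        = γ ^ t * (γ * ∑ s', D (t+1) s' * V s') := by rw [pow_succ]; ring
    rw [this]
    rw [add_assoc, ← mul_add, key]
    ring
  have hDnn : ∀ t s, 0 ≤ D t s := fun t => distAt_nonneg P π' hP hπ' d0 hd0.1 t
  have hincr : ∀ t, 0 ≤ γ ^ t * ∑ s, D t s * A0 s := fun t =>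
    mul_nonneg (pow_nonneg hγ0 t)
      (Finset.sum_nonneg fun s _ => mul_nonneg (hDnn t s) (hA0 s))
  have hmono : Monotone U := monotone_nat_of_le_succ fun t => by
    rw [hUstep t]; linarith [hincr t]
  -- U tends to value of π'
  have hsum' := val_summable P π' hP hπ' r hγ0 hγ1 d0 hd0
  have h1 : Filter.Tendsto
      (fun T => ∑ t ∈ Finset.range T, γ ^ t * ∑ s, ∑ a, D t s * π' s a * r s a)
      Filter.atTop (nhds (value P π' r γ d0)) := by
    exact hsum'.hasSum.tendsto_sum_nat
  have h2 : Filter.Tendsto (fun T => γ ^ T * ∑ s, D T s * V s)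
      Filter.atTop (nhds 0) := by
    have hbd : ∀ T, ‖γ ^ T * ∑ s, D T s * V s‖ ≤ (∑ s, |V s|) * γ ^ T := by
      intro T
      rw [Real.norm_eq_abs, abs_mul, abs_pow, abs_of_nonneg hγ0, mul_comm]
      refine mul_le_mul_of_nonneg_right ?_ (pow_nonneg hγ0 T)
      calc |∑ s, D T s * V s| ≤ ∑ s, |D T s * V s| := Finset.abs_sum_le_sum_abs _ _
        _ ≤ ∑ s, |V s| := by
            refine Finset.sum_le_sum fun s _ => ?_
            rw [abs_mul, abs_of_nonneg (hDnn T s)]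
            have hle : D T s ≤ 1 := by
              have h3 := Finset.single_le_sum (f := D T) (fun i _ => hDnn T i)
                (Finset.mem_univ s)
              have h4 : ∑ i, D T i = 1 := (distAt_isDist P π' hP hπ' d0 hd0 T).2
              linarith
            exact mul_le_of_le_one_left (abs_nonneg _) hle
    have hgeo : Filter.Tendsto (fun T : ℕ => (∑ s, |V s|) * γ ^ T)
        Filter.atTop (nhds 0) := by
      have := tendsto_pow_atTop_nhds_zero_of_lt_one hγ0 hγ1
      simpa using this.const_mul (∑ s, |V s|)
    exact squeeze_zero_norm hbd hgeo
  have hUt : Filter.Tendsto U Filter.atTop (nhds (value P π' r γ d0)) := by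
    have := h1.add h2
    simpa using this
  have hfin : U (T + 1) ≤ value P π' r γ d0 :=
    ge_of_tendsto hUt (Filter.eventually_atTop.mpr ⟨T + 1, fun n hn => hmono hn⟩)
  have hUT : value P π r γ d0 + γ ^ T * ∑ s, D T s * A0 s ≤ U (T + 1) := by
    rw [hUstep T, ← hU0]
    have : U 0 ≤ U T := hmono (Nat.zero_le T)
    linarith
  exact hUT.trans hfin

lemma prefProb_succ (d : S → ℝ) (n : ℕ) (f : Fin (n+1) → S × A) :
    prefProb P π d (n+1) f
      = d (f 0).1 * π (f 0).1 (f 0).2 *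
          prefProb P π (P (f 0).1 (f 0).2) n (fun i => f i.succ) := rfl

lemma prefProb_nonneg (hP : IsKernel P) (hπ : IsPolicy π) :
    ∀ (h : ℕ) (d : S → ℝ), (∀ s, 0 ≤ d s) → ∀ f : Fin h → S × A, 0 ≤ prefProb P π d h f := by
  intro h
  induction h with
  | zero => intro d _ f; exact zero_le_one
  | succ n ih =>
    intro d hd f
    rw [prefProb_succ]
    exact mul_nonneg (mul_nonneg (hd _) ((hπ _).1 _)) (ih _ (fun s => (hP _ _).1 s) _)

lemma prefProb_mass (hP : IsKernel P) (hπ : IsPolicy π) :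
    ∀ (h : ℕ) (d : S → ℝ), IsDist d → ∑ f : Fin h → S × A, prefProb P π d h f = 1 := by
  intro h
  induction h with
  | zero =>
    intro d _
    simp only [show ∀ f : Fin 0 → S × A, prefProb P π d 0 f = (1:ℝ) from fun _ => rfl]
    simp
  | succ n ih =>
    intro d hd
    rw [← (Fin.consEquiv (fun _ : Fin (n+1) => S × A)).sum_comp
      (fun f => prefProb P π d (n+1) f)]
    rw [Fintype.sum_prod_type]
    have hterm : ∀ p : S × A, ∀ g : Fin n → S × A,
        prefProb P π d (n+1) (Fin.consEquiv (fun _ : Fin (n+1) => S × A) (p, g))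
          = d p.1 * π p.1 p.2 * prefProb P π (P p.1 p.2) n g := by
      intro p g
      rw [prefProb_succ]
      simp only [Fin.consEquiv_apply, Fin.cons_zero, Fin.cons_succ]
    calc (∑ p : S × A, ∑ g : Fin n → S × A, prefProb P π d (n+1) (Fin.consEquiv (fun _ : Fin (n+1) => S × A) (p, g)))
        = ∑ p : S × A, ∑ g : Fin n → S × A, d p.1 * π p.1 p.2 * prefProb P π (P p.1 p.2) n g := by
          exact Finset.sum_congr rfl fun p _ => Finset.sum_congr rfl fun g _ => hterm p g
      _ = ∑ p : S × A, d p.1 * π p.1 p.2 := by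
          refine Finset.sum_congr rfl fun p _ => ?_
          rw [← Finset.mul_sum, ih (P p.1 p.2) (hP p.1 p.2), mul_one]
      _ = 1 := by
          rw [Fintype.sum_prod_type]
          have : ∀ s, ∑ a, d s * π s a = d s := by
            intro s; rw [← Finset.mul_sum, (hπ s).2, mul_one]
          rw [Finset.sum_congr rfl fun s _ => this s, hd.2]

lemma distAt_succ_decomp (d : S → ℝ) (t : ℕ) (s' : S) :
    distAt P π d (t+1) s' = ∑ p : S × A, d p.1 * π p.1 p.2 * distAt P π (P p.1 p.2) t s' := by
  rw [distAt_succ]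
  have hstep : step P π d = fun s'' => ∑ p : S × A, d p.1 * π p.1 p.2 * P p.1 p.2 s'' := by
    funext s''
    unfold step
    rw [Fintype.sum_prod_type]
  rw [hstep]
  exact distAt_linear P π (fun p : S × A => d p.1 * π p.1 p.2) t (fun p => P p.1 p.2) s'

lemma prefProb_marg (hP : IsKernel P) (hπ : IsPolicy π) (φ : S → A → ℝ) :
    ∀ (t h : ℕ) (ht : t < h) (d : S → ℝ), IsDist d →
      ∑ f : Fin h → S × A, prefProb P π d h f * φ (f ⟨t, ht⟩).1 (f ⟨t, ht⟩).2
        = ∑ s, ∑ a, distAt P π d t s * π s a * φ s a := by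
  intro t
  induction t with
  | zero =>
    intro h ht d hd
    obtain ⟨n, rfl⟩ : ∃ n, h = n + 1 := ⟨h - 1, by omega⟩
    rw [← (Fin.consEquiv (fun _ : Fin (n+1) => S × A)).sum_comp
      (fun f => prefProb P π d (n+1) f * φ (f ⟨0, ht⟩).1 (f ⟨0, ht⟩).2)]
    rw [Fintype.sum_prod_type]
    have hterm : ∀ p : S × A, ∀ g : Fin n → S × A,
        prefProb P π d (n+1) (Fin.consEquiv (fun _ : Fin (n+1) => S × A) (p, g))
            * φ ((Fin.consEquiv (fun _ : Fin (n+1) => S × A) (p, g)) ⟨0, ht⟩).1 ((Fin.consEquiv (fun _ : Fin (n+1) => S × A) (p, g)) ⟨0, ht⟩).2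
          = d p.1 * π p.1 p.2 * φ p.1 p.2 * prefProb P π (P p.1 p.2) n g := by
      intro p g
      rw [prefProb_succ]
      have h0 : (⟨0, ht⟩ : Fin (n+1)) = 0 := rfl
      simp only [h0, Fin.consEquiv_apply, Fin.cons_zero, Fin.cons_succ]
      ring
    calc (∑ p : S × A, ∑ g : Fin n → S × A, prefProb P π d (n+1) (Fin.consEquiv (fun _ : Fin (n+1) => S × A) (p, g))
            * φ ((Fin.consEquiv (fun _ : Fin (n+1) => S × A) (p, g)) ⟨0, ht⟩).1 ((Fin.consEquiv (fun _ : Fin (n+1) => S × A) (p, g)) ⟨0, ht⟩).2)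
        = ∑ p : S × A, ∑ g : Fin n → S × A,
            d p.1 * π p.1 p.2 * φ p.1 p.2 * prefProb P π (P p.1 p.2) n g :=
          Finset.sum_congr rfl fun p _ => Finset.sum_congr rfl fun g _ => hterm p g
      _ = ∑ p : S × A, d p.1 * π p.1 p.2 * φ p.1 p.2 := by
          refine Finset.sum_congr rfl fun p _ => ?_
          rw [← Finset.mul_sum, prefProb_mass P π hP hπ n (P p.1 p.2) (hP p.1 p.2), mul_one]
      _ = ∑ s, ∑ a, distAt P π d 0 s * π s a * φ s a := by
          rw [Fintype.sum_prod_type]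
          rfl
  | succ t ih =>
    intro h ht d hd
    obtain ⟨n, rfl⟩ : ∃ n, h = n + 1 := ⟨h - 1, by omega⟩
    have htn : t < n := by omega
    rw [← (Fin.consEquiv (fun _ : Fin (n+1) => S × A)).sum_comp
      (fun f => prefProb P π d (n+1) f * φ (f ⟨t+1, ht⟩).1 (f ⟨t+1, ht⟩).2)]
    rw [Fintype.sum_prod_type]
    have hterm : ∀ p : S × A, ∀ g : Fin n → S × A,
        prefProb P π d (n+1) (Fin.consEquiv (fun _ : Fin (n+1) => S × A) (p, g))
            * φ ((Fin.consEquiv (fun _ : Fin (n+1) => S × A) (p, g)) ⟨t+1, ht⟩).1 ((Fin.consEquiv (fun _ : Fin (n+1) => S × A) (p, g)) ⟨t+1, ht⟩).2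
          = d p.1 * π p.1 p.2 *
              (prefProb P π (P p.1 p.2) n g * φ (g ⟨t, htn⟩).1 (g ⟨t, htn⟩).2) := by
      intro p g
      rw [prefProb_succ]
      have hsucc : (⟨t+1, ht⟩ : Fin (n+1)) = Fin.succ ⟨t, htn⟩ := rfl
      simp only [hsucc, Fin.consEquiv_apply, Fin.cons_zero, Fin.cons_succ]
      ring
    calc (∑ p : S × A, ∑ g : Fin n → S × A, prefProb P π d (n+1) (Fin.consEquiv (fun _ : Fin (n+1) => S × A) (p, g))
            * φ ((Fin.consEquiv (fun _ : Fin (n+1) => S × A) (p, g)) ⟨t+1, ht⟩).1 ((Fin.consEquiv (fun _ : Fin (n+1) => S × A) (p, g)) ⟨t+1, ht⟩).2)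
        = ∑ p : S × A, d p.1 * π p.1 p.2 *
            ∑ g : Fin n → S × A,
              prefProb P π (P p.1 p.2) n g * φ (g ⟨t, htn⟩).1 (g ⟨t, htn⟩).2 := by
          refine Finset.sum_congr rfl fun p _ => ?_
          rw [Finset.mul_sum]
          exact Finset.sum_congr rfl fun g _ => hterm p g
      _ = ∑ p : S × A, d p.1 * π p.1 p.2 *
            ∑ s, ∑ a, distAt P π (P p.1 p.2) t s * π s a * φ s a := by
          refine Finset.sum_congr rfl fun p _ => ?_
          rw [ih n htn (P p.1 p.2) (hP p.1 p.2)]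
      _ = ∑ s, ∑ a, distAt P π d (t+1) s * π s a * φ s a := by
          have hlhs : ∀ p : S × A, d p.1 * π p.1 p.2 *
              ∑ s, ∑ a, distAt P π (P p.1 p.2) t s * π s a * φ s a
            = ∑ s, ∑ a, (d p.1 * π p.1 p.2) * distAt P π (P p.1 p.2) t s * (π s a * φ s a) := by
            intro p
            rw [Finset.mul_sum]
            refine Finset.sum_congr rfl fun s _ => ?_
            rw [Finset.mul_sum]
            exact Finset.sum_congr rfl fun a _ => by ring
          rw [Finset.sum_congr rfl fun p _ => hlhs p]
          rw [Finset.sum_comm]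
          refine Finset.sum_congr rfl fun s _ => ?_
          rw [Finset.sum_comm]
          refine Finset.sum_congr rfl fun a _ => ?_
          rw [← Finset.sum_mul]
          rw [← distAt_succ_decomp P π d t s]
          ring

lemma eventProb_nonneg (hP : IsKernel P) (hπ : IsPolicy π) (d : S → ℝ)
    (hd : ∀ s, 0 ≤ d s) (h : ℕ) (E : (Fin h → S × A) → Prop) :
    0 ≤ eventProb P π d h E := by
  refine Finset.sum_nonneg fun f _ => ?_
  split
  · exact prefProb_nonneg P π hP hπ h d hd f
  · exact le_rfl

end Aux

section Tilde

set_option linter.unusedSectionVars false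

variable (P : S → A → S → ℝ) (I : Set (S × A)) (r : S → A → ℝ) (Rt : ℝ)

lemma Ptil_kernel (hP : IsKernel P) : IsKernel (Ptil P I) := by
  rintro (_ | s) a
  · constructor
    · intro s'?
      simp only [Ptil]
      split <;> norm_num
    · simp only [Ptil]
      rw [Fintype.sum_option]
      simp
  · constructor
    · intro s'?
      simp only [Ptil]
      by_cases hIa : (s, a) ∈ I
      · simp only [hIa, if_true]
        split <;> norm_num
      · simp only [hIa, if_false]
        match s'? with
        | none => exact le_refl 0
        | some s' => exact (hP s a).1 s'
    · simp only [Ptil]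
      by_cases hIa : (s, a) ∈ I
      · simp only [hIa, if_true]
        rw [Fintype.sum_option]
        simp
      · simp only [hIa, if_false]
        rw [Fintype.sum_option]
        simpa using (hP s a).2

lemma extPol_policy (π : S → A → ℝ) (hπ : IsPolicy π) : IsPolicy (extPol π) := by
  rintro (_ | s)
  · constructor
    · intro a
      show (0:ℝ) ≤ (Fintype.card A : ℝ)⁻¹
      positivity
    · show ∑ _a : A, (Fintype.card A : ℝ)⁻¹ = 1
      rw [Finset.sum_const, Finset.card_univ, nsmul_eq_mul]
      rw [mul_inv_cancel₀]
      exact_mod_cast Fintype.card_ne_zero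
  · exact hπ s

lemma extDist_isDist (d : S → ℝ) (hd : IsDist d) : IsDist (extDist d) := by
  constructor
  · rintro (_ | s)
    · exact le_refl 0
    · exact hd.1 s
  · show ∑ s? : Option S, extDist d s? = 1
    rw [Fintype.sum_option]
    show (0:ℝ) + ∑ s, d s = 1
    rw [zero_add, hd.2]

lemma distAt_pure_none (π : S → A → ℝ) (hπ : IsPolicy π) (t : ℕ) :
    distAt (Ptil P I) (extPol π) (pureDist (none : Option S)) t = pureDist none := by
  induction t with
  | zero => rfl
  | succ t ih =>
    rw [distAt_succ', ih]
    funext s'?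
    unfold step
    rw [Fintype.sum_option]
    have h1 : ∑ s : S, ∑ a, pureDist (none : Option S) (some s) * extPol π (some s) a
        * Ptil P I (some s) a s'? = 0 := by
      refine Finset.sum_eq_zero fun s _ => Finset.sum_eq_zero fun a _ => ?_
      have hz : pureDist (none : Option S) (some s) = 0 := by simp [pureDist]
      rw [hz]
      ring
    rw [h1, add_zero]
    have h2 : ∀ a : A, pureDist (none : Option S) none * extPol π none a * Ptil P I none a s'?
        = (Fintype.card A : ℝ)⁻¹ * pureDist (none : Option S) s'? := by
      intro a
      have hp : pureDist (none : Option S) none = 1 := by simp [pureDist]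
      have he : extPol π none a = (Fintype.card A : ℝ)⁻¹ := rfl
      have hpt : Ptil P I none a s'? = pureDist (none : Option S) s'? := by
        cases s'? <;> simp [Ptil, pureDist]
      rw [hp, he, hpt, one_mul]
    rw [Finset.sum_congr rfl fun a _ => h2 a]
    rw [Finset.sum_const, Finset.card_univ, nsmul_eq_mul, ← mul_assoc]
    rw [mul_inv_cancel₀ (by exact_mod_cast (Fintype.card_ne_zero : Fintype.card A ≠ 0)), one_mul]

lemma vf_none (π : S → A → ℝ) (hπ : IsPolicy π) (γ : ℝ) :
    vf (Ptil P I) (extPol π) (rtil r I Rt) γ (none : Option S) = 0 := by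
  unfold vf value
  have h1 : ∀ t : ℕ, γ ^ t * ∑ s? : Option S, ∑ a,
      distAt (Ptil P I) (extPol π) (pureDist none) t s? * extPol π s? a
        * rtil r I Rt s? a = 0 := by
    intro t
    rw [distAt_pure_none P I π hπ t]
    have : ∑ s? : Option S, ∑ a, pureDist (none : Option S) s? * extPol π s? a
        * rtil r I Rt s? a = 0 := by
      refine Finset.sum_eq_zero fun s? _ => Finset.sum_eq_zero fun a _ => ?_
      cases s? with
      | none => show _ * _ * (0:ℝ) = 0; ring
      | some s =>
        have hz : pureDist (none : Option S) (some s) = 0 := by simp [pureDist]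
        rw [hz]
        ring
    rw [this, mul_zero]
  rw [tsum_congr h1, tsum_zero]

lemma vf_ge_Rt (hP : IsKernel P) (π : S → A → ℝ) (hπ : IsPolicy π)
    (hr : ∀ s a, 0 ≤ r s a) (hRt : Rt ≤ 0) {γ : ℝ} (hγ0 : 0 ≤ γ) (hγ1 : γ < 1) :
    ∀ s? : Option S, Rt ≤ vf (Ptil P I) (extPol π) (rtil r I Rt) γ s? := by
  set W : Option S → ℝ := vf (Ptil P I) (extPol π) (rtil r I Rt) γ with hW
  obtain ⟨s₀, -, hmin⟩ := Finset.exists_min_image Finset.univ W Finset.univ_nonempty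
  suffices hm : Rt ≤ W s₀ by
    intro s?
    exact hm.trans (hmin s? (Finset.mem_univ s?))
  cases s₀ with
  | none =>
    rw [hW, vf_none P I r Rt π hπ γ]
    exact hRt
  | some s =>
    have hb := vf_bellman (Ptil P I) (extPol π) (Ptil_kernel P I hP)
      (extPol_policy π hπ) (rtil r I Rt) hγ0 hγ1 (some s)
    set m := W (some s) with hm
    have hterm : ∀ a : A, min Rt (γ * m) ≤ rtil r I Rt (some s) a
        + γ * ∑ s'? : Option S, Ptil P I (some s) a s'? * W s'? := by
      intro a
      by_cases hIa : (s, a) ∈ I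
      · have h1 : rtil r I Rt (some s) a = Rt := by simp [rtil, hIa]
        have h2 : ∑ s'? : Option S, Ptil P I (some s) a s'? * W s'? = W none := by
          have : ∀ s'? : Option S, Ptil P I (some s) a s'? * W s'?
              = (if s'? = none then 1 else 0) * W s'? := by
            intro s'?; simp [Ptil, hIa]
          rw [Fintype.sum_option ]
          simp [this]
        rw [h1, h2, hW, vf_none P I r Rt π hπ γ]
        simp only [mul_zero, add_zero]
        exact min_le_left _ _
      · have h1 : rtil r I Rt (some s) a = r s a := by simp [rtil, hIa]
        have h2 : m ≤ ∑ s'? : Option S, Ptil P I (some s) a s'? * W s'? := by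
          have he : ∀ s'? : Option S, Ptil P I (some s) a s'? * W s'?
              = (match s'? with | none => 0 | some s' => P s a s') * W s'? := by
            intro s'?; simp [Ptil, hIa]
          rw [Fintype.sum_option]
          simp only [he]
          have : (0:ℝ) * W none + ∑ s' : S, P s a s' * W (some s')
              ≥ ∑ s' : S, P s a s' * m := by
            rw [zero_mul, zero_add]
            exact Finset.sum_le_sum fun s' _ =>
              mul_le_mul_of_nonneg_left (hmin (some s') (Finset.mem_univ _)) ((hP s a).1 s')
          calc m = ∑ s' : S, P s a s' * m := by rw [← Finset.sum_mul, (hP s a).2, one_mul]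
            _ ≤ _ := this
        calc min Rt (γ * m) ≤ γ * m := min_le_right _ _
          _ ≤ r s a + γ * ∑ s'? : Option S, Ptil P I (some s) a s'? * W s'? := by
              have := mul_le_mul_of_nonneg_left h2 hγ0
              linarith [hr s a]
          _ = _ := by rw [h1]
    have hmain : min Rt (γ * m) ≤ m := by
      calc min Rt (γ * m)
          = ∑ a, π s a * min Rt (γ * m) := by
            rw [← Finset.sum_mul, (hπ s).2, one_mul]
        _ ≤ ∑ a, π s a * (rtil r I Rt (some s) a
              + γ * ∑ s'? : Option S, Ptil P I (some s) a s'? * W s'?) :=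
            Finset.sum_le_sum fun a _ =>
              mul_le_mul_of_nonneg_left (hterm a) ((hπ s).1 a)
        _ = m := by
            rw [hm, hW]
            exact (hb).symm
    rcases le_total Rt (γ * m) with h | h
    · rwa [min_eq_left h] at hmain
    · rw [min_eq_right h] at hmain
      have hm0 : 0 ≤ m := by nlinarith
      linarith
lemma step_ext (π' : S → A → ℝ) (hπ'I : ∀ s a, (s, a) ∈ I → π' s a = 0) (d : S → ℝ) :
    step (Ptil P I) (extPol π') (extDist d) = extDist (step P π' d) := by
  funext s'?
  unfold step
  rw [Fintype.sum_option]
  have hnone : ∑ a, extDist d none * extPol π' none a * Ptil P I none a s'? = 0 := by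
    refine Finset.sum_eq_zero fun a _ => ?_
    show (0:ℝ) * _ * _ = 0
    ring
  rw [hnone, zero_add]
  cases s'? with
  | none =>
    show _ = (0:ℝ)
    refine Finset.sum_eq_zero fun s _ => Finset.sum_eq_zero fun a _ => ?_
    by_cases hIa : (s, a) ∈ I
    · rw [show extPol π' (some s) a = π' s a from rfl, hπ'I s a hIa]
      ring
    · have : Ptil P I (some s) a none = 0 := by simp [Ptil, hIa]
      rw [this, mul_zero]
  | some s' =>
    show _ = step P π' d s'
    unfold step
    refine Finset.sum_congr rfl fun s _ => Finset.sum_congr rfl fun a _ => ?_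
    by_cases hIa : (s, a) ∈ I
    · rw [show extPol π' (some s) a = π' s a from rfl, hπ'I s a hIa]
      ring
    · have : Ptil P I (some s) a (some s') = P s a s' := by simp [Ptil, hIa]
      rw [this]
      rfl

lemma distAt_ext (π' : S → A → ℝ) (hπ'I : ∀ s a, (s, a) ∈ I → π' s a = 0)
    (d0 : S → ℝ) (t : ℕ) :
    distAt (Ptil P I) (extPol π') (extDist d0) t = extDist (distAt P π' d0 t) := by
  induction t with
  | zero => rfl
  | succ t ih =>
    rw [distAt_succ', ih, step_ext P I π' hπ'I, ← distAt_succ']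

end Tilde

/-- if `R̃ < 0` and `I` is partial, every optimal policy of `M̃`
satisfies `P_G(π̃*) = 0`. -/
theorem stmt_16
    (P : S → A → S → ℝ) (r : S → A → ℝ) (γ : ℝ) (sbad sabs : S) (d0 : S → ℝ)
    (I : Set (S × A)) (Rt : ℝ)
    (hP : IsKernel P) (hγ0 : 0 ≤ γ) (hγ1 : γ < 1)
    (hr : ∀ s a, 0 ≤ r s a ∧ r s a ≤ 1)
    (hne : sbad ≠ sabs)
    (hPbad : ∀ a, P sbad a = pureDist sabs)
    (hPabs : ∀ a, P sabs a = pureDist sabs)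
    (hrbad : ∀ a : A, r sbad a = 0) (hrabs : ∀ a : A, r sabs a = 0)
    (hd0 : IsDist d0)
    (hI : ∀ p ∈ I, p.1 ≠ sbad ∧ p.1 ≠ sabs)
    (hpartial : ∀ p ∈ I, ∃ a' : A, (p.1, a') ∉ I)
    (hRt : Rt < 0) :
    ∀ πo, IsPolicy πo →
      (∀ π', IsPolicy π' →
        value (Ptil P I) (extPol π') (rtil r I Rt) γ (extDist d0)
          ≤ value (Ptil P I) (extPol πo) (rtil r I Rt) γ (extDist d0)) →
      PG P πo d0 γ I = 0 := by
  intro πo hπo hopt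
  classical
  -- mass placed by πo on intervened actions at each state
  set m : S → ℝ := fun s => ∑ a, if (s, a) ∈ I then πo s a else 0 with hm
  have hm0 : ∀ s, 0 ≤ m s := by
    intro s
    refine Finset.sum_nonneg fun a _ => ?_
    split
    · exact (hπo s).1 a
    · exact le_rfl
  -- the event probability vanishes for h = 0 trivially;
  -- main claim: all occupancy-weighted intervention masses vanish (when γ > 0)
  have hKmain : 0 < γ → ∀ t s, distAt P πo d0 t s * m s = 0 := by
    intro hγpos
    by_contra hK
    push_neg at hK
    obtain ⟨t0, s0', hts⟩ := hK
    have hex : ∃ t, ∃ s, distAt P πo d0 t s * m s ≠ 0 := ⟨t0, s0', hts⟩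
    set T := Nat.find hex with hT
    obtain ⟨s0, hs0⟩ := Nat.find_spec hex
    have hminT : ∀ t < T, ∀ s, distAt P πo d0 t s * m s = 0 := by
      intro t ht s
      by_contra h
      exact Nat.find_min hex ht ⟨s, h⟩
    -- safe fallback action
    have hgex : ∀ s : S, ∃ b : A, (∃ a, (s, a) ∈ I) → (s, b) ∉ I := by
      intro s
      by_cases h : ∃ a, (s, a) ∈ I
      · obtain ⟨a, ha⟩ := h
        obtain ⟨b, hb⟩ := hpartial (s, a) ha
        exact ⟨b, fun _ => hb⟩
      · exact ⟨Classical.arbitrary A, fun h' => absurd h' h⟩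
    choose g hg using hgex
    -- the improved policy
    set π' : S → A → ℝ := fun s a => (if (s, a) ∈ I then 0 else πo s a)
        + (if a = g s then m s else 0) with hπ'def
    have hπ'I : ∀ s a, (s, a) ∈ I → π' s a = 0 := by
      intro s a hIa
      have hgs : (s, g s) ∉ I := hg s ⟨a, hIa⟩
      have hag : a ≠ g s := by
        intro h
        exact hgs (h ▸ hIa)
      simp [hπ'def, hIa, hag]
    have hπ' : IsPolicy π' := by
      intro s
      constructor
      · intro a
        refine add_nonneg ?_ ?_
        · split
          · exact le_rfl
          · exact (hπo s).1 a
        · split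
          · exact hm0 s
          · exact le_rfl
      · rw [Finset.sum_add_distrib]
        have h1 : ∑ a, (if (s, a) ∈ I then (0:ℝ) else πo s a) = 1 - m s := by
          have he : ∀ a, (if (s, a) ∈ I then (0:ℝ) else πo s a)
              = πo s a - (if (s, a) ∈ I then πo s a else 0) := by
            intro a; split <;> ring
          rw [Finset.sum_congr rfl fun a _ => he a, Finset.sum_sub_distrib, (hπo s).2]
        have h2 : ∑ a, (if a = g s then m s else 0) = m s := by
          simp
        rw [h1, h2]
        ring
    -- up to time T the two policies generate the same state distribution
    have hmatch : ∀ t ≤ T, distAt P π' d0 t = distAt P πo d0 t := by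
      intro t ht
      induction t with
      | zero => rfl
      | succ u ih =>
        have hu : u ≤ T := by omega
        rw [distAt_succ', distAt_succ', ih hu]
        funext s'
        unfold step
        refine Finset.sum_congr rfl fun s _ => ?_
        by_cases hds : distAt P πo d0 u s = 0
        · rw [hds]
          simp
        · have hms : m s = 0 := by
            have h0 := hminT u (by omega) s
            rcases mul_eq_zero.mp h0 with h | h
            · exact absurd h hds
            · exact h
          have hIz : ∀ b, (s, b) ∈ I → πo s b = 0 := by
            intro b hb
            have hnn : ∀ a ∈ Finset.univ, (0:ℝ) ≤ if (s, a) ∈ I then πo s a else 0 := by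
              intro a _
              split
              · exact (hπo s).1 a
              · exact le_rfl
            have := (Finset.sum_eq_zero_iff_of_nonneg hnn).mp hms b (Finset.mem_univ b)
            simpa [hb] using this
          have hπeq : ∀ a, π' s a = πo s a := by
            intro a
            by_cases hIa : (s, a) ∈ I
            · rw [hπ'I s a hIa, hIz a hIa]
            · simp [hπ'def, hIa, hms]
          exact Finset.sum_congr rfl fun a _ => by rw [hπeq a]
    -- positivity at time T
    have hdge : 0 ≤ distAt P πo d0 T s0 := distAt_nonneg P πo hP hπo d0 hd0.1 T s0
    obtain ⟨hd_ne, hm_ne⟩ := mul_ne_zero_iff.mp hs0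
    have hd_pos : 0 < distAt P πo d0 T s0 := lt_of_le_of_ne hdge (Ne.symm hd_ne)
    have hm_pos : 0 < m s0 := lt_of_le_of_ne (hm0 s0) (Ne.symm hm_ne)
    -- the advantage function in the absorbing MDP
    set W : Option S → ℝ := vf (Ptil P I) (extPol πo) (rtil r I Rt) γ with hW
    set Q : Option S → A → ℝ := fun s? a =>
      rtil r I Rt s? a + γ * ∑ s'? : Option S, Ptil P I s? a s'? * W s'? with hQ
    have hWnone : W none = 0 := vf_none P I r Rt πo hπo γ
    have hWge : ∀ s?, Rt ≤ W s? :=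
      vf_ge_Rt P I r Rt hP πo hπo (fun s a => (hr s a).1) (le_of_lt hRt) hγ0 hγ1
    have hbell : ∀ s?, W s? = ∑ a, extPol πo s? a * Q s? a := fun s? =>
      vf_bellman (Ptil P I) (extPol πo) (Ptil_kernel P I hP)
        (extPol_policy πo hπo) (rtil r I Rt) hγ0 hγ1 s?
    have hQI : ∀ s a, (s, a) ∈ I → Q (some s) a = Rt := by
      intro s a hIa
      have h1 : rtil r I Rt (some s) a = Rt := by simp [rtil, hIa]
      have h2 : ∑ s'? : Option S, Ptil P I (some s) a s'? * W s'? = W none := by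
        rw [Fintype.sum_option]
        simp [Ptil, hIa]
      rw [hQ]
      simp only [h1, h2, hWnone, mul_zero, add_zero]
    have hQsafe : ∀ s a, (s, a) ∉ I → Q (some s) a
        = r s a + γ * ∑ s', P s a s' * W (some s') := by
      intro s a hIa
      have h1 : rtil r I Rt (some s) a = r s a := by simp [rtil, hIa]
      have h2 : ∑ s'? : Option S, Ptil P I (some s) a s'? * W s'?
          = ∑ s', P s a s' * W (some s') := by
        rw [Fintype.sum_option]
        simp [Ptil, hIa]
      rw [hQ]
      simp only [h1, h2]
    have hQnone : ∀ a, Q none a = 0 := by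
      intro a
      have h1 : rtil r I Rt none a = 0 := rfl
      have h2 : ∑ s'? : Option S, Ptil P I none a s'? * W s'? = W none := by
        rw [Fintype.sum_option]
        simp [Ptil]
      rw [hQ]
      simp only [h1, h2, hWnone, mul_zero, add_zero, zero_add]
    have hQsafe_ge : ∀ s a, (s, a) ∉ I → γ * Rt ≤ Q (some s) a := by
      intro s a hIa
      rw [hQsafe s a hIa]
      have h2 : Rt ≤ ∑ s', P s a s' * W (some s') := by
        calc Rt = ∑ s', P s a s' * Rt := by rw [← Finset.sum_mul, (hP s a).2, one_mul]
          _ ≤ ∑ s', P s a s' * W (some s') :=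
            Finset.sum_le_sum fun s' _ =>
              mul_le_mul_of_nonneg_left (hWge (some s')) ((hP s a).1 s')
      nlinarith [(hr s a).1]
    set A0 : Option S → ℝ := fun s? =>
      (∑ a, extPol π' s? a * Q s? a) - W s? with hA0def
    have hA0some : ∀ s, A0 (some s) = m s * (Q (some s) (g s) - Rt) := by
      intro s
      have hdiff : ∀ a, extPol π' (some s) a * Q (some s) a
          - extPol πo (some s) a * Q (some s) a
          = (if a = g s then m s * Q (some s) a else 0)
            - (if (s, a) ∈ I then πo s a * Q (some s) a else 0) := by
        intro a
        show π' s a * Q (some s) a - πo s a * Q (some s) a = _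
        rw [hπ'def]
        by_cases hag : a = g s
        · rw [hag]
          by_cases hIgs : (s, g s) ∈ I <;> simp [hIgs] <;> ring
        · by_cases hIa : (s, a) ∈ I <;> simp [hIa, hag] <;> ring
      have : A0 (some s) = ∑ a, (extPol π' (some s) a * Q (some s) a
          - extPol πo (some s) a * Q (some s) a) := by
        show (∑ a, extPol π' (some s) a * Q (some s) a) - W (some s) = _
        rw [Finset.sum_sub_distrib]
        rw [← hbell (some s)]
      rw [this, Finset.sum_congr rfl fun a _ => hdiff a, Finset.sum_sub_distrib]
      have h1 : ∑ a, (if a = g s then m s * Q (some s) a else 0)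
          = m s * Q (some s) (g s) := by
        simp
      have h2 : ∑ a, (if (s, a) ∈ I then πo s a * Q (some s) a else 0)
          = m s * Rt := by
        have he : ∀ a, (if (s, a) ∈ I then πo s a * Q (some s) a else 0)
            = (if (s, a) ∈ I then πo s a else 0) * Rt := by
          intro a
          by_cases hIa : (s, a) ∈ I
          · rw [if_pos hIa, if_pos hIa, hQI s a hIa]
          · rw [if_neg hIa, if_neg hIa, zero_mul]
        rw [Finset.sum_congr rfl fun a _ => he a, ← Finset.sum_mul, hm]
      rw [h1, h2]
      ring
    have hA0nn : ∀ s?, 0 ≤ A0 s? := by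
      rintro (_ | s)
      · show (0:ℝ) ≤ (∑ a, extPol π' none a * Q none a) - W none
        have hz : ∀ a, extPol π' none a * Q none a = 0 := fun a => by
          rw [hQnone a, mul_zero]
        rw [Finset.sum_congr rfl fun a _ => hz a, Finset.sum_const, hWnone]
        simp
      · rw [hA0some s]
        rcases eq_or_lt_of_le (hm0 s) with hz | hpos
        · rw [← hz, zero_mul]
        · have hIex : ∃ a, (s, a) ∈ I := by
            by_contra hno
            push_neg at hno
            have : m s = 0 := by
              rw [hm]
              exact Finset.sum_eq_zero fun a _ => by rw [if_neg (hno a)]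
            rw [this] at hpos
            exact lt_irrefl 0 hpos
          have hgs : (s, g s) ∉ I := hg s hIex
          have := hQsafe_ge s (g s) hgs
          have hQge : Rt ≤ Q (some s) (g s) := by nlinarith
          have : 0 ≤ Q (some s) (g s) - Rt := by linarith
          exact mul_nonneg (le_of_lt hpos) this
    have hA0pos : 0 < A0 (some s0) := by
      rw [hA0some s0]
      have hIex : ∃ a, (s0, a) ∈ I := by
        by_contra hno
        push_neg at hno
        have : m s0 = 0 := by
          rw [hm]
          exact Finset.sum_eq_zero fun a _ => by rw [if_neg (hno a)]
        rw [this] at hm_pos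
        exact lt_irrefl 0 hm_pos
      have hgs : (s0, g s0) ∉ I := hg s0 hIex
      have h1 := hQsafe_ge s0 (g s0) hgs
      have h2 : 0 < Q (some s0) (g s0) - Rt := by nlinarith
      exact mul_pos hm_pos h2
    -- apply the improvement bound
    have himp := improve (Ptil P I) (extPol πo) (extPol π') (rtil r I Rt)
      (extDist d0) (Ptil_kernel P I hP) (extPol_policy πo hπo)
      (extPol_policy π' hπ') (extDist_isDist d0 hd0) hγ0 hγ1 A0
      (fun s? => rfl) hA0nn T
    have hopt' := hopt π' hπ'
    have hsum_pos : 0 < ∑ s? : Option S,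
        distAt (Ptil P I) (extPol π') (extDist d0) T s? * A0 s? := by
      have hext := distAt_ext P I π' hπ'I d0 T
      have hterm_pos : 0 < distAt (Ptil P I) (extPol π') (extDist d0) T (some s0)
          * A0 (some s0) := by
        rw [hext]
        show 0 < distAt P π' d0 T s0 * A0 (some s0)
        rw [hmatch T le_rfl]
        exact mul_pos hd_pos hA0pos
      have hterms_nn : ∀ s? : Option S, 0 ≤ distAt (Ptil P I) (extPol π') (extDist d0) T s?
          * A0 s? := by
        intro s?
        refine mul_nonneg ?_ (hA0nn s?)
        exact distAt_nonneg (Ptil P I) (extPol π') (Ptil_kernel P I hP)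
          (extPol_policy π' hπ') (extDist d0) (extDist_isDist d0 hd0).1 T s?
      calc (0:ℝ) < distAt (Ptil P I) (extPol π') (extDist d0) T (some s0) * A0 (some s0) :=
            hterm_pos
        _ ≤ ∑ s? : Option S, distAt (Ptil P I) (extPol π') (extDist d0) T s? * A0 s? :=
            Finset.single_le_sum (fun s? _ => hterms_nn s?) (Finset.mem_univ (some s0))
    have hγT : 0 < γ ^ T := pow_pos hγpos T
    nlinarith [himp, hopt', mul_pos hγT hsum_pos]
  -- conclude : every event probability vanishes
  have hev : ∀ h : ℕ, γ ^ h * eventProb P πo d0 h (fun f => ∃ i, f i ∈ I) = 0 := by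
    intro h
    rcases Nat.eq_zero_or_pos h with rfl | hh
    · have : eventProb P πo d0 0 (fun f => ∃ i, f i ∈ I) = 0 := by
        unfold eventProb
        refine Finset.sum_eq_zero fun f _ => ?_
        rw [if_neg]
        rintro ⟨i, -⟩
        exact i.elim0
      rw [this, mul_zero]
    rcases lt_or_eq_of_le hγ0 with hγpos | hγz
    · -- γ > 0 : use the occupancy bound
      have K := hKmain hγpos
      set φ : S → A → ℝ := fun s a => if (s, a) ∈ I then 1 else 0 with hφ
      have hub : eventProb P πo d0 h (fun f => ∃ i, f i ∈ I)
          ≤ ∑ i : Fin h, ∑ f : Fin h → S × A,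
              prefProb P πo d0 h f * φ (f i).1 (f i).2 := by
        rw [Finset.sum_comm]
        unfold eventProb
        refine Finset.sum_le_sum fun f _ => ?_
        have hppnn : 0 ≤ prefProb P πo d0 h f :=
          prefProb_nonneg P πo hP hπo h d0 hd0.1 f
        by_cases hE : ∃ i : Fin h, f i ∈ I
        · rw [if_pos hE]
          obtain ⟨i0, hi0⟩ := hE
          have hval : prefProb P πo d0 h f * φ (f i0).1 (f i0).2
              = prefProb P πo d0 h f := by
            rw [hφ]
            simp only []
            rw [show ((f i0).1, (f i0).2) = f i0 from rfl, if_pos hi0, mul_one]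
          calc prefProb P πo d0 h f
              = prefProb P πo d0 h f * φ (f i0).1 (f i0).2 := hval.symm
            _ ≤ ∑ i : Fin h, prefProb P πo d0 h f * φ (f i).1 (f i).2 := by
                refine Finset.single_le_sum
                  (f := fun i : Fin h => prefProb P πo d0 h f * φ (f i).1 (f i).2)
                  (fun i _ => ?_) (Finset.mem_univ i0)
                refine mul_nonneg hppnn ?_
                rw [hφ]
                simp only []
                split
                · exact zero_le_one
                · exact le_rfl
        · rw [if_neg hE]
          refine Finset.sum_nonneg fun i _ => ?_
          refine mul_nonneg hppnn ?_
          rw [hφ]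
          simp only []
          split
          · exact zero_le_one
          · exact le_rfl
      have hmarg : ∀ i : Fin h, ∑ f : Fin h → S × A,
          prefProb P πo d0 h f * φ (f i).1 (f i).2 = 0 := by
        intro i
        have hi : (⟨i.1, i.2⟩ : Fin h) = i := Fin.eta i i.2
        have := prefProb_marg P πo hP hπo φ i.1 h i.2 d0 hd0
        rw [hi] at this
        rw [this]
        refine Finset.sum_eq_zero fun s _ => ?_
        have hin : ∑ a, distAt P πo d0 i.1 s * πo s a * φ s a
            = distAt P πo d0 i.1 s * m s := by
          rw [hm, Finset.mul_sum]
          refine Finset.sum_congr rfl fun a _ => ?_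
          rw [hφ]
          simp only []
          by_cases hIa : (s, a) ∈ I
          · rw [if_pos hIa, if_pos hIa, mul_one]
          · rw [if_neg hIa, if_neg hIa, mul_zero, mul_zero]
        rw [hin, K i.1 s]
      have hlb : 0 ≤ eventProb P πo d0 h (fun f => ∃ i, f i ∈ I) :=
        eventProb_nonneg P πo hP hπo d0 hd0.1 h _
      have hub' : eventProb P πo d0 h (fun f => ∃ i, f i ∈ I) ≤ 0 := by
        calc eventProb P πo d0 h (fun f => ∃ i, f i ∈ I)
            ≤ ∑ i : Fin h, ∑ f : Fin h → S × A,
                prefProb P πo d0 h f * φ (f i).1 (f i).2 := hub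
          _ = 0 := Finset.sum_eq_zero fun i _ => hmarg i
      rw [le_antisymm hub' hlb, mul_zero]
    · -- γ = 0
      rw [← hγz, zero_pow hh.ne', zero_mul]
  unfold PG
  rw [tsum_congr hev, tsum_zero, mul_zero]

end SafeRL
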